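/- Let 0 < β₁, β₂ < 1 with λ := β₁/√β₂ < 1, and let g_1, g_2, … ∈ ℝ^d satisfy ‖g_i‖∞ ≤ G∞ for all i. Define m_t = (1−β₁) Σ_{i=1}^t β₁^{t−i} g_i and v_t = (1−β₂) Σ_{i=1}^t β₂^{t−i} g_i ⊙ g_i, and let v̂_t ∈ ℝ^d satisfy v̂_{t,j} ≥ v_{t,j} for every coordinate j. Then for every p ≥ 1 and T ≥ 0, Σ_{t=p}^{T+p} Σ_{j=1}^d m_{t,j}²/√(v̂_{t,j}) ≤ ( d(1−β₁)/√(1−β₂) ) · ( T·G∞/(1−λ) + G∞/(1−λ)² ), where terms with v̂_{t,j} = 0 are interpreted as 0. In particular Σ_{t=p}^{T+p} ‖(1/⁴√v̂_t) ⊙ m_t‖² = O(T) uniformly in p. -/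

import Mathlib

open Finset

lemma convgAdam_geom_aux (r : ℝ) (h0 : 0 ≤ r) (h1 : r < 1) (n : ℕ) :
    ∑ i ∈ Finset.range n, r ^ i ≤ (1 - r)⁻¹ := by
  have hn : 0 ≤ r ^ n := pow_nonneg h0 n
  rw [geom_sum_eq h1.ne n, div_le_iff_of_neg (by linarith)]
  have h : (1 - r)⁻¹ * (1 - r) = 1 := inv_mul_cancel₀ (by linarith)
  nlinarith

lemma convgAdam_geom_window (r : ℝ) (h0 : 0 ≤ r) (h1 : r < 1) (t : ℕ) :
    ∑ i ∈ Finset.Icc 1 t, r ^ (t - i) ≤ (1 - r)⁻¹ := by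
  calc ∑ i ∈ Finset.Icc 1 t, r ^ (t - i)
      ≤ ∑ i ∈ Finset.Icc 0 t, r ^ (t - i) :=
        Finset.sum_le_sum_of_subset_of_nonneg
          (Finset.Icc_subset_Icc_left (Nat.zero_le 1))
          (fun i _ _ => pow_nonneg h0 _)
    _ = ∑ i ∈ Finset.range (t + 1), r ^ (t - i) := by
        rw [Finset.range_eq_Ico, ← Finset.Ico_add_one_right_eq_Icc]
    _ = ∑ i ∈ Finset.range (t + 1), r ^ i := by
        have := Finset.sum_range_reflect (fun i => r ^ i) (t + 1)
        simpa using this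
    _ ≤ (1 - r)⁻¹ := convgAdam_geom_aux r h0 h1 _

/-- Lemma 1 of the paper.  For the convgAdam moment sequences
`m_t = (1−β₁) Σ_{i=1}^t β₁^{t−i} g_i` and `v_t = (1−β₂) Σ_{i=1}^t β₂^{t−i} g_i ⊙ g_i`
with bounded gradients `‖g_i‖∞ ≤ G∞`, `λ = β₁/√β₂ < 1`, and any `v̂_t ≥ v_t`
coordinatewise, the normalized moment energy over any window `[p, T+p]` satisfies
`Σ_t Σ_j m_{t,j}²/√(v̂_{t,j}) ≤ (d(1−β₁)/√(1−β₂))·(T·G∞/(1−λ) + G∞/(1−λ)²)`,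
i.e. it is `O(T)` uniformly in `p`.  (Coordinates with `v̂_{t,j} = 0` contribute `0`;
in Lean division by zero is zero, matching this convention.) -/
theorem convgAdam_moment_energy_window
    (d : ℕ) (β₁ β₂ Ginf : ℝ)
    (hβ₁ : 0 < β₁) (hβ₁' : β₁ < 1) (hβ₂ : 0 < β₂) (hβ₂' : β₂ < 1)
    (hlam : β₁ / Real.sqrt β₂ < 1)
    (g : ℕ → Fin d → ℝ) (hg : ∀ i, 1 ≤ i → ∀ j, |g i j| ≤ Ginf)
    (m v : ℕ → Fin d → ℝ)
    (hm : ∀ t j, m t j = (1 - β₁) * ∑ i ∈ Finset.Icc 1 t, β₁ ^ (t - i) * g i j)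
    (hv : ∀ t j, v t j = (1 - β₂) * ∑ i ∈ Finset.Icc 1 t, β₂ ^ (t - i) * (g i j) ^ 2)
    (vhat : ℕ → Fin d → ℝ) (hvhat : ∀ t j, v t j ≤ vhat t j) :
    ∀ p : ℕ, 1 ≤ p → ∀ T : ℕ,
      ∑ t ∈ Finset.Icc p (T + p), ∑ j, (m t j) ^ 2 / Real.sqrt (vhat t j)
        ≤ ((d : ℝ) * (1 - β₁) / Real.sqrt (1 - β₂)) *
            ((T : ℝ) * Ginf / (1 - β₁ / Real.sqrt β₂)
              + Ginf / (1 - β₁ / Real.sqrt β₂) ^ 2) := by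
  intro p hp T
  set lam : ℝ := β₁ / Real.sqrt β₂ with hlamdef
  have hsβ₂ : 0 < Real.sqrt β₂ := Real.sqrt_pos.mpr hβ₂
  have hlam0 : 0 ≤ lam := div_nonneg hβ₁.le hsβ₂.le
  have h1l : 0 < 1 - lam := by linarith
  have hs1β₂ : 0 < Real.sqrt (1 - β₂) := Real.sqrt_pos.mpr (by linarith)
  rcases Nat.eq_zero_or_pos d with hd | hd
  · subst hd; simp
  have hG : 0 ≤ Ginf := le_trans (abs_nonneg _) (hg 1 le_rfl ⟨0, hd⟩)
  set K : ℝ := (1 - β₁) / Real.sqrt (1 - β₂) * (Ginf * (1 - lam)⁻¹) with hK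
  have hKnn : 0 ≤ K := by
    apply mul_nonneg
    · exact div_nonneg (by linarith) hs1β₂.le
    · exact mul_nonneg hG (inv_nonneg.mpr h1l.le)
  have hβ₁eq : β₁ = lam * Real.sqrt β₂ := by
    rw [hlamdef]; field_simp
  -- the per-(t, j) pointwise bound
  have key : ∀ t : ℕ, ∀ j : Fin d,
      (m t j) ^ 2 / Real.sqrt (vhat t j) ≤ K := by
    intro t j
    have hv0 : 0 ≤ v t j := by
      rw [hv]
      exact mul_nonneg (by linarith)
        (Finset.sum_nonneg fun i _ => mul_nonneg (pow_nonneg hβ₂.le _) (sq_nonneg _))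
    have hvh0 : 0 ≤ vhat t j := le_trans hv0 (hvhat t j)
    rcases eq_or_lt_of_le (Real.sqrt_nonneg (vhat t j)) with h0 | h0
    · rw [← h0, div_zero]; exact hKnn
    rw [div_le_iff₀ h0]
    -- Step 1: Cauchy–Schwarz
    have cs : (m t j) ^ 2 ≤ (1 - β₁) * ∑ i ∈ Finset.Icc 1 t, β₁ ^ (t - i) * (g i j) ^ 2 := by
      have hsq : ∀ i : ℕ, (Real.sqrt β₁ ^ (t - i)) ^ 2 = β₁ ^ (t - i) := by
        intro i; rw [← pow_mul, mul_comm, pow_mul, Real.sq_sqrt hβ₁.le]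
      have h1 : (∑ i ∈ Finset.Icc 1 t, β₁ ^ (t - i) * g i j) ^ 2
          ≤ (∑ i ∈ Finset.Icc 1 t, β₁ ^ (t - i)) *
              ∑ i ∈ Finset.Icc 1 t, β₁ ^ (t - i) * (g i j) ^ 2 := by
        have hcs := Finset.sum_mul_sq_le_sq_mul_sq (Finset.Icc 1 t)
          (fun i => Real.sqrt β₁ ^ (t - i)) (fun i => Real.sqrt β₁ ^ (t - i) * g i j)
        calc (∑ i ∈ Finset.Icc 1 t, β₁ ^ (t - i) * g i j) ^ 2
            = (∑ i ∈ Finset.Icc 1 t,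
                Real.sqrt β₁ ^ (t - i) * (Real.sqrt β₁ ^ (t - i) * g i j)) ^ 2 := by
              congr 1; apply Finset.sum_congr rfl; intro i _
              rw [← mul_assoc, ← sq, hsq]
          _ ≤ (∑ i ∈ Finset.Icc 1 t, (Real.sqrt β₁ ^ (t - i)) ^ 2) *
                ∑ i ∈ Finset.Icc 1 t, (Real.sqrt β₁ ^ (t - i) * g i j) ^ 2 := hcs
          _ = (∑ i ∈ Finset.Icc 1 t, β₁ ^ (t - i)) *
                ∑ i ∈ Finset.Icc 1 t, β₁ ^ (t - i) * (g i j) ^ 2 := by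
              congr 1
              · exact Finset.sum_congr rfl fun i _ => hsq i
              · apply Finset.sum_congr rfl; intro i _; rw [mul_pow, hsq]
      have h2 : ∑ i ∈ Finset.Icc 1 t, β₁ ^ (t - i) ≤ (1 - β₁)⁻¹ :=
        convgAdam_geom_window β₁ hβ₁.le hβ₁' t
      have h3 : 0 ≤ ∑ i ∈ Finset.Icc 1 t, β₁ ^ (t - i) * (g i j) ^ 2 :=
        Finset.sum_nonneg fun i _ => mul_nonneg (pow_nonneg hβ₁.le _) (sq_nonneg _)
      have h4 : (1 - β₁) * (1 - β₁)⁻¹ = 1 := mul_inv_cancel₀ (by linarith)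
      calc (m t j) ^ 2
          = (1 - β₁) ^ 2 * (∑ i ∈ Finset.Icc 1 t, β₁ ^ (t - i) * g i j) ^ 2 := by
            rw [hm]; ring
        _ ≤ (1 - β₁) ^ 2 * ((1 - β₁)⁻¹ *
              ∑ i ∈ Finset.Icc 1 t, β₁ ^ (t - i) * (g i j) ^ 2) := by
            apply mul_le_mul_of_nonneg_left _ (sq_nonneg _)
            exact h1.trans (mul_le_mul_of_nonneg_right h2 h3)
        _ = (1 - β₁) * ((1 - β₁) * (1 - β₁)⁻¹) *
              ∑ i ∈ Finset.Icc 1 t, β₁ ^ (t - i) * (g i j) ^ 2 := by ring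
        _ = (1 - β₁) * ∑ i ∈ Finset.Icc 1 t, β₁ ^ (t - i) * (g i j) ^ 2 := by
            rw [h4, mul_one]
    -- Step 2: termwise bound using vhat
    have step2 : ∀ i ∈ Finset.Icc 1 t,
        β₁ ^ (t - i) * (g i j) ^ 2
          ≤ lam ^ (t - i) * (Ginf * (Real.sqrt (vhat t j) / Real.sqrt (1 - β₂))) := by
      intro i hi
      have hi1 : 1 ≤ i := (Finset.mem_Icc.mp hi).1
      have hb2sq : (Real.sqrt β₂ ^ (t - i)) ^ 2 = β₂ ^ (t - i) := by
        rw [← pow_mul, mul_comm, pow_mul, Real.sq_sqrt hβ₂.le]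
      have hsingle : (1 - β₂) * (β₂ ^ (t - i) * (g i j) ^ 2) ≤ vhat t j := by
        refine le_trans ?_ (hvhat t j)
        rw [hv]
        apply mul_le_mul_of_nonneg_left _ (by linarith : (0:ℝ) ≤ 1 - β₂)
        exact Finset.single_le_sum (f := fun k => β₂ ^ (t - k) * (g k j) ^ 2)
          (fun k _ => mul_nonneg (pow_nonneg hβ₂.le _) (sq_nonneg _)) hi
      have hb : Real.sqrt (1 - β₂) * (Real.sqrt β₂ ^ (t - i) * |g i j|)
          ≤ Real.sqrt (vhat t j) := by
        have hnn : 0 ≤ Real.sqrt (1 - β₂) * (Real.sqrt β₂ ^ (t - i) * |g i j|) :=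
          mul_nonneg hs1β₂.le (mul_nonneg (pow_nonneg hsβ₂.le _) (abs_nonneg _))
        rw [Real.le_sqrt hnn hvh0]
        calc (Real.sqrt (1 - β₂) * (Real.sqrt β₂ ^ (t - i) * |g i j|)) ^ 2
            = (Real.sqrt (1 - β₂)) ^ 2 * ((Real.sqrt β₂ ^ (t - i)) ^ 2 * |g i j| ^ 2) := by
              ring
          _ = (1 - β₂) * (β₂ ^ (t - i) * (g i j) ^ 2) := by
              rw [Real.sq_sqrt (by linarith : (0:ℝ) ≤ 1 - β₂), hb2sq, sq_abs]
          _ ≤ vhat t j := hsingle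
      have hb' : Real.sqrt β₂ ^ (t - i) * |g i j|
          ≤ Real.sqrt (vhat t j) / Real.sqrt (1 - β₂) := by
        rw [le_div_iff₀ hs1β₂]
        calc Real.sqrt β₂ ^ (t - i) * |g i j| * Real.sqrt (1 - β₂)
            = Real.sqrt (1 - β₂) * (Real.sqrt β₂ ^ (t - i) * |g i j|) := by ring
          _ ≤ Real.sqrt (vhat t j) := hb
      calc β₁ ^ (t - i) * (g i j) ^ 2
          = lam ^ (t - i) * (|g i j| * (Real.sqrt β₂ ^ (t - i) * |g i j|)) := by
            rw [hβ₁eq, mul_pow, ← sq_abs]; ring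
        _ ≤ lam ^ (t - i) * (Ginf * (Real.sqrt (vhat t j) / Real.sqrt (1 - β₂))) := by
            apply mul_le_mul_of_nonneg_left _ (pow_nonneg hlam0 _)
            exact mul_le_mul (hg i hi1 j) hb'
              (mul_nonneg (pow_nonneg hsβ₂.le _) (abs_nonneg _)) hG
    -- combine
    have hsum : ∑ i ∈ Finset.Icc 1 t, β₁ ^ (t - i) * (g i j) ^ 2
        ≤ (1 - lam)⁻¹ * (Ginf * (Real.sqrt (vhat t j) / Real.sqrt (1 - β₂))) := by
      calc ∑ i ∈ Finset.Icc 1 t, β₁ ^ (t - i) * (g i j) ^ 2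
          ≤ ∑ i ∈ Finset.Icc 1 t,
              lam ^ (t - i) * (Ginf * (Real.sqrt (vhat t j) / Real.sqrt (1 - β₂))) :=
            Finset.sum_le_sum step2
        _ = (∑ i ∈ Finset.Icc 1 t, lam ^ (t - i)) *
              (Ginf * (Real.sqrt (vhat t j) / Real.sqrt (1 - β₂))) := by
            rw [Finset.sum_mul]
        _ ≤ (1 - lam)⁻¹ * (Ginf * (Real.sqrt (vhat t j) / Real.sqrt (1 - β₂))) := by
            apply mul_le_mul_of_nonneg_right (convgAdam_geom_window lam hlam0 hlam t)
            exact mul_nonneg hG (div_nonneg (Real.sqrt_nonneg _) hs1β₂.le)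
    calc (m t j) ^ 2
        ≤ (1 - β₁) * ∑ i ∈ Finset.Icc 1 t, β₁ ^ (t - i) * (g i j) ^ 2 := cs
      _ ≤ (1 - β₁) * ((1 - lam)⁻¹ * (Ginf * (Real.sqrt (vhat t j) / Real.sqrt (1 - β₂)))) :=
          mul_le_mul_of_nonneg_left hsum (by linarith)
      _ = K * Real.sqrt (vhat t j) := by
          rw [hK]; field_simp
  -- sum everything up
  have hsum : ∑ t ∈ Finset.Icc p (T + p), ∑ j, (m t j) ^ 2 / Real.sqrt (vhat t j)
      ≤ ((T : ℝ) + 1) * ((d : ℝ) * K) := by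
    calc ∑ t ∈ Finset.Icc p (T + p), ∑ j, (m t j) ^ 2 / Real.sqrt (vhat t j)
        ≤ ∑ t ∈ Finset.Icc p (T + p), ∑ _j : Fin d, K := by
          apply Finset.sum_le_sum; intro t _
          exact Finset.sum_le_sum fun j _ => key t j
      _ = ((T : ℝ) + 1) * ((d : ℝ) * K) := by
          simp only [Finset.sum_const, Finset.card_univ, Fintype.card_fin,
            smul_eq_mul, Nat.card_Icc]
          have hcard : T + p + 1 - p = T + 1 := by omega
          rw [hcard]
          ring
  refine hsum.trans ?_
  -- final arithmetic comparison
  have hu : (1 : ℝ) ≤ (1 - lam)⁻¹ := by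
    rw [le_inv_comm₀] <;> linarith
  have hu0 : 0 < (1 - lam)⁻¹ := inv_pos.mpr h1l
  have hrw : ((d : ℝ) * (1 - β₁) / Real.sqrt (1 - β₂)) *
      ((T : ℝ) * Ginf / (1 - lam) + Ginf / (1 - lam) ^ 2)
      = (d : ℝ) * ((1 - β₁) / Real.sqrt (1 - β₂)) *
          (Ginf * ((T : ℝ) * (1 - lam)⁻¹ + (1 - lam)⁻¹ ^ 2)) := by
    simp only [div_eq_mul_inv, ← inv_pow]
    ring
  rw [hrw, hK]
  have hc : 0 ≤ (d : ℝ) * ((1 - β₁) / Real.sqrt (1 - β₂)) * Ginf :=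
    mul_nonneg (mul_nonneg (Nat.cast_nonneg d) (div_nonneg (by linarith) hs1β₂.le)) hG
  have hT0 : (0 : ℝ) ≤ (T : ℝ) := Nat.cast_nonneg T
  nlinarith [mul_le_mul_of_nonneg_left (mul_le_mul_of_nonneg_left hu hu0.le) hc,
    mul_nonneg hc hu0.le, mul_nonneg (mul_nonneg hc hu0.le) hT0]
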